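/- Let F : S^ℤ → S^ℤ be a cellular automaton (shift-commuting and continuous) that is not surjective. Then F is not preinjective: there exist distinct points x ≠ y agreeing outside a finite set of coordinates with F(x) = F(y). -/

import Mathlib

private lemma myhill_pow_aux (a : ℕ) (ha : 1 ≤ a) : ∀ k, a^k * (a + k) ≤ (a+1)^k * a := by
  intro k
  induction k with
  | zero => simp
  | succ k ih =>
    have h1 : a^k ≤ (a+1)^k := Nat.pow_le_pow_left (by omega) k
    calc a^(k+1) * (a + (k+1)) = a * (a^k * (a + k)) + a^(k+1) := by ring
      _ ≤ a * ((a+1)^k * a) + (a+1)^k * a := by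
          have := Nat.mul_le_mul_left a ih
          have h2 : a^(k+1) ≤ (a+1)^k * a := by
            calc a^(k+1) = a^k * a := by ring
              _ ≤ (a+1)^k * a := Nat.mul_le_mul_right a h1
          omega
      _ ≤ (a+1)^(k+1) * a := by ring_nf; nlinarith [pow_pos (Nat.lt_of_lt_of_le Nat.zero_lt_one ha) k]

private lemma myhill_key (a C N : ℕ) (ha : 1 ≤ a) :
    ∃ k, N ≤ k ∧ 0 < k ∧ C * a ^ k < (a+1)^k := by
  have hbase : ∀ k, k = C * a → C * a ^ k < (a + 1) ^ k := by
    intro k hk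
    have h := myhill_pow_aux a ha k
    rw [hk] at h ⊢
    have hpow : 1 ≤ a ^ (C * a) := Nat.one_le_pow _ _ (by omega)
    nlinarith
  have hstep : ∀ k, C * a ^ k < (a+1)^k → C * a ^ (k+1) < (a+1)^(k+1) := by
    intro k hk
    calc C * a^(k+1) = (C * a^k) * a := by ring
      _ < (a+1)^k * a := by
          have h0 : 0 < a := by omega
          exact (Nat.mul_lt_mul_right h0).mpr hk
      _ < (a+1)^(k+1) := by
          have h0 : 0 < (a+1)^k := pow_pos (by omega) k
          calc (a+1)^k * a < (a+1)^k * (a+1) := by nlinarith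
            _ = (a+1)^(k+1) := by ring
  have hall : ∀ m, C * a ^ (C * a + m) < (a+1)^(C * a + m) := by
    intro m
    induction m with
    | zero => exact hbase _ (by omega)
    | succ m ih => exact hstep _ ih
  refine ⟨C * a + N + 1, by omega, by omega, ?_⟩
  have := hall (N + 1)
  simpa [Nat.add_assoc] using this

private lemma myhill_cyl {S : Type*} [TopologicalSpace S] [DiscreteTopology S]
    {U : Set (ℤ → S)} {z : ℤ → S} (hU : U ∈ nhds z) :
    ∃ I : Finset ℤ, ∀ y : ℤ → S, (∀ i ∈ I, y i = z i) → y ∈ U := by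
  rw [nhds_pi, Filter.mem_pi] at hU
  obtain ⟨I, hIfin, t, ht, hsub⟩ := hU
  refine ⟨hIfin.toFinset, fun y hy => hsub fun i hi => ?_⟩
  have : y i = z i := hy i (hIfin.mem_toFinset.mpr hi)
  rw [this]
  exact mem_of_mem_nhds (ht i)

private lemma myhill_radius {S : Type*} [Fintype S] [TopologicalSpace S] [DiscreteTopology S]
    (F : (ℤ → S) → (ℤ → S)) (hcont : Continuous F) :
    ∃ r : ℕ, ∀ x y : ℤ → S, (∀ i : ℤ, |i| ≤ (r:ℤ) → x i = y i) → F x 0 = F y 0 := by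
  classical
  have hg : Continuous fun x : ℤ → S => F x 0 := (continuous_apply (0:ℤ)).comp hcont
  set g : (ℤ → S) → S := fun x => F x 0 with hgdef
  have hnbhd : ∀ x : ℤ → S, {y | g y = g x} ∈ nhds x := by
    intro x
    have : IsOpen {y | g y = g x} := hg.isOpen_preimage {g x} (isOpen_discrete _)
    exact this.mem_nhds rfl
  choose I hI using fun x => myhill_cyl (hnbhd x)
  set U : (ℤ → S) → Set (ℤ → S) := fun x => {y | ∀ i ∈ I x, y i = x i} with hUdef
  have hUopen : ∀ x, IsOpen (U x) := by
    intro x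
    have : U x = Set.pi (↑(I x) : Set ℤ) (fun i => {x i}) := by
      ext y; simp [Set.mem_pi, U]
    rw [this]
    exact isOpen_set_pi (Finset.finite_toSet _) (fun i _ => isOpen_discrete _)
  obtain ⟨t, htc⟩ := isCompact_univ.elim_nhds_subcover U
    (fun x _ => (hUopen x).mem_nhds (fun i _ => rfl))
  set A : Finset ℤ := t.biUnion I with hAdef
  refine ⟨A.sup Int.natAbs, fun x y hxy => ?_⟩
  have hx : x ∈ ⋃ c ∈ t, U c := htc.2 (Set.mem_univ x)
  simp only [Set.mem_iUnion] at hx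
  obtain ⟨c, hct, hxc⟩ := hx
  have hyc : y ∈ U c := by
    intro i hi
    have hiA : i ∈ A := Finset.mem_biUnion.mpr ⟨c, hct, hi⟩
    have habs : i.natAbs ≤ A.sup Int.natAbs := Finset.le_sup hiA
    have hile : |i| ≤ (↑(A.sup Int.natAbs) : ℤ) := by
      rw [Int.abs_eq_natAbs]; exact_mod_cast habs
    have : y i = x i := (hxy i hile).symm
    rw [this]
    exact hxc i hi
  have h1 : g x = g c := hI c x hxc
  have h2 : g y = g c := hI c y hyc
  exact h1.trans h2.symm

/-- Myhill's direction of the Garden of Eden theorem: a non-surjective cellular automaton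
on the full shift is not preinjective. -/
theorem stmt_14 {S : Type*} [Fintype S] [TopologicalSpace S] [DiscreteTopology S]
    (σ : (ℤ → S) → (ℤ → S)) (hσ : ∀ x i, σ x i = x (i + 1))
    (F : (ℤ → S) → (ℤ → S)) (hcont : Continuous F) (hcomm : F ∘ σ = σ ∘ F)
    (hns : ¬ Function.Surjective F) :
    ∃ x y : ℤ → S, x ≠ y ∧ {j : ℤ | x j ≠ y j}.Finite ∧ F x = F y := by
  classical
  by_contra hcon
  push_neg at hcon
  have hpre : ∀ x y : ℤ → S, x ≠ y → {j : ℤ | x j ≠ y j}.Finite → F x ≠ F y := hcon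
  -- S is nontrivial
  have hS : Nontrivial S := by
    by_contra hs
    have hsub : Subsingleton S := not_nontrivial_iff_subsingleton.mp hs
    exact hns fun b => ⟨b, funext fun i => Subsingleton.elim _ _⟩
  haveI := hS
  -- shift commutation facts
  have hσF : ∀ x, F (σ x) = σ (F x) := fun x => congrFun hcomm x
  have hσinj : Function.Injective σ := by
    intro a b hab
    funext j
    have h := congrFun hab (j - 1)
    rw [hσ, hσ] at h
    simpa using h
  have hτ : ∀ x : ℤ → S, F (fun t => x (t - 1)) = (fun j => F x (j - 1)) := by
    intro x
    apply hσinj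
    have h1 : σ (fun t => x (t - 1)) = x := by
      funext t; rw [hσ]; norm_num
    have h2 : σ (fun j => F x (j - 1)) = F x := by
      funext t; rw [hσ]; norm_num
    rw [← hσF, h1, h2]
  have hshift : ∀ (m : ℤ) (x : ℤ → S) (j : ℤ), F (fun t => x (t + m)) j = F x (j + m) := by
    intro m
    induction m using Int.induction_on with
    | zero => intro x j; simp
    | succ i ih =>
      intro x j
      have h1 : (fun t => x (t + ((i:ℤ)+1))) = σ (fun t => x (t + i)) := by
        funext t; rw [hσ]; congr 1; ring
      rw [h1, hσF, hσ, ih]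
      congr 1; ring
    | pred i ih =>
      intro x j
      have h1 : (fun t => x (t + (-(i:ℤ)-1))) = (fun t => (fun s => x (s + (-(i:ℤ)))) (t - 1)) := by
        funext t; congr 1; ring
      rw [h1, hτ (fun s => x (s + (-(i:ℤ))))]
      show F (fun s => x (s + (-(i:ℤ)))) (j - 1) = F x (j + (-(i:ℤ)-1))
      rw [ih]
      congr 1; ring
  -- local rule radius
  obtain ⟨r, hr0⟩ := myhill_radius F hcont
  have hrule : ∀ (x y : ℤ → S) (i : ℤ), (∀ t : ℤ, |t - i| ≤ (r:ℤ) → x t = y t) → F x i = F y i := by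
    intro x y i hxy
    have hx : F x i = F (fun t => x (t + i)) 0 := by rw [hshift]; norm_num
    have hy : F y i = F (fun t => y (t + i)) 0 := by rw [hshift]; norm_num
    rw [hx, hy]
    apply hr0
    intro t ht
    apply hxy
    have : t + i - i = t := by ring
    rw [this]
    exact ht
  -- orphan pattern
  rw [Function.Surjective] at hns
  push_neg at hns
  obtain ⟨z, hz⟩ := hns
  have hzr : z ∉ Set.range F := by rintro ⟨a2, ha2⟩; exact hz a2 ha2
  have hclosed : IsClosed (Set.range F) := (isCompact_range hcont).isClosed
  have hmem : (Set.range F)ᶜ ∈ nhds z := hclosed.isOpen_compl.mem_nhds hzr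
  obtain ⟨I, hI⟩ := myhill_cyl hmem
  have horph0 : ∀ x : ℤ → S, ∃ i ∈ I, F x i ≠ z i := by
    intro x
    by_contra hc
    push_neg at hc
    exact hI (F x) hc (Set.mem_range_self x)
  obtain ⟨n, w, hn1, horph⟩ : ∃ (n : ℕ) (w : Fin n → S), 1 ≤ n ∧
      ∀ (x : ℤ → S) (i : ℤ), ∃ j : Fin n, F x (i + (j:ℤ)) ≠ w j := by
    set M : ℕ := I.sup Int.natAbs with hMdef
    refine ⟨2 * M + 1, fun j => z ((j:ℤ) - (M:ℤ)), by omega, ?_⟩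
    set n : ℕ := 2 * M + 1 with hndef
    set w : Fin n → S := fun j => z ((j:ℤ) - (M:ℤ)) with hwdef
    intro x i
    obtain ⟨e, heI, hne⟩ := horph0 (fun t => x (t + (i + (M:ℤ))))
    have habs : e.natAbs ≤ M := Finset.le_sup heI
    have hjlt : (e + (M:ℤ)).toNat < n := by omega
    refine ⟨⟨(e + (M:ℤ)).toNat, hjlt⟩, ?_⟩
    have hjval : (((e + (M:ℤ)).toNat : ℕ) : ℤ) = e + M := Int.toNat_of_nonneg (by omega)
    have hw : w ⟨(e + (M:ℤ)).toNat, hjlt⟩ = z e := by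
      show z ((((e + (M:ℤ)).toNat : ℕ) : ℤ) - (M:ℤ)) = z e
      rw [hjval]; congr 1; ring
    have hF : F x (i + (((e + (M:ℤ)).toNat : ℕ) : ℤ)) = F (fun t => x (t + (i + (M:ℤ)))) e := by
      rw [hshift]; congr 1; rw [hjval]; ring
    rw [hF, hw]
    exact hne
  -- counting setup
  set q : ℕ := Fintype.card S with hqdef
  have hq : 2 ≤ q := Fintype.one_lt_card
  have hqn : 2 ≤ q ^ n := le_trans hq (Nat.le_self_pow (by omega) q)
  obtain ⟨k, hkN, hk0, hkey⟩ := myhill_key (q ^ n - 1) (q ^ (2 * r)) (2 * r + 1) (by omega)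
  have hkn : 2 * r + 1 ≤ k * n := le_trans hkN (Nat.le_mul_of_pos_right k (by omega))
  obtain ⟨L, hL⟩ : ∃ L : ℕ, L + 2 * r = k * n := ⟨k * n - 2 * r, by omega⟩
  obtain ⟨s0⟩ : Nonempty S := inferInstance
  set xc : (Fin L → S) → (ℤ → S) :=
    fun u i => if h : 0 ≤ i ∧ i < (L:ℤ) then u ⟨i.toNat, by omega⟩ else s0 with hxcdef
  have heval1 : ∀ (u : Fin L → S) (m : Fin L), xc u ((m : ℕ) : ℤ) = u m := by
    intro u m
    have hm : (0:ℤ) ≤ ((m:ℕ):ℤ) ∧ ((m:ℕ):ℤ) < (L:ℤ) := by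
      constructor
      · positivity
      · exact_mod_cast m.isLt
    rw [hxcdef]
    simp only []
    rw [dif_pos hm]
    exact congrArg u (Fin.ext rfl)
  have heval2 : ∀ (u : Fin L → S) (i : ℤ), ¬(0 ≤ i ∧ i < (L:ℤ)) → xc u i = s0 := by
    intro u i hi
    rw [hxcdef]
    simp only []
    rw [dif_neg hi]
  -- the injection
  have hblt : ∀ (b : Fin k) (j : Fin n), (b:ℕ) * n + (j:ℕ) < k * n := by
    intro b j
    calc (b:ℕ) * n + (j:ℕ) < (b:ℕ) * n + n := by omega
      _ = ((b:ℕ) + 1) * n := by ring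
      _ ≤ k * n := Nat.mul_le_mul_right n b.isLt
  set Ψ : (Fin L → S) → (Fin k → {v : Fin n → S // v ≠ w}) :=
    fun u b => ⟨fun j => F (xc u) ((((b:ℕ) * n + (j:ℕ) : ℕ) : ℤ) - (r:ℤ)), by
      obtain ⟨j, hj⟩ := horph (xc u) (((b:ℕ) * n : ℕ) - (r:ℤ))
      intro hcontra
      apply hj
      have := congrFun hcontra j
      rw [← this]
      congr 1
      push_cast
      ring⟩ with hΨdef
  have hΨinj : Function.Injective Ψ := by
    intro u v huv
    by_contra hune
    -- F (xc u) = F (xc v)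
    have hFeq : F (xc u) = F (xc v) := by
      funext i
      by_cases hi : -(r:ℤ) ≤ i ∧ i < (L:ℤ) + (r:ℤ)
      · -- in window
        obtain ⟨m, hmval⟩ : ∃ m : ℕ, ((m:ℕ):ℤ) = i + r :=
          ⟨(i + (r:ℤ)).toNat, Int.toNat_of_nonneg (by omega)⟩
        have hmlt : m < k * n := by
          have h2 : ((m:ℕ):ℤ) < ((k*n : ℕ) : ℤ) := by
            rw [hmval]
            have h3 : ((L + 2*r : ℕ) : ℤ) = ((k*n : ℕ) : ℤ) := by rw [hL]
            push_cast at h3 ⊢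
            omega
          exact_mod_cast h2
        have hnpos : 0 < n := by omega
        have hbk : m / n < k := by
          rw [Nat.div_lt_iff_lt_mul hnpos]; exact hmlt
        have h1 := congrFun (congrArg Subtype.val (congrFun huv ⟨m / n, hbk⟩))
          ⟨m % n, Nat.mod_lt m hnpos⟩
        simp only [hΨdef] at h1
        have hbj : ((⟨m / n, hbk⟩ : Fin k) : ℕ) * n + ((⟨m % n, Nat.mod_lt m hnpos⟩ : Fin n) : ℕ) = m :=
          Nat.div_add_mod' m n
        rw [hbj] at h1
        have hpos : (((m : ℕ) : ℤ) - (r:ℤ)) = i := by rw [hmval]; ring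
        rw [hpos] at h1
        exact h1
      · -- out of window
        apply hrule
        intro t ht
        rw [abs_le] at ht
        have hout : ¬(0 ≤ t ∧ t < (L:ℤ)) := by omega
        rw [heval2 u t hout, heval2 v t hout]
    -- contradiction with preinjectivity
    have hxune : xc u ≠ xc v := by
      intro heq
      apply hune
      funext m
      have := congrFun heq ((m:ℕ):ℤ)
      rwa [heval1, heval1] at this
    have hfin : {j : ℤ | xc u j ≠ xc v j}.Finite := by
      apply Set.Finite.subset (Set.finite_Icc (0:ℤ) (L:ℤ))
      intro j hj
      simp only [Set.mem_setOf_eq] at hj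
      by_contra hjn
      simp only [Set.mem_Icc] at hjn
      have hout : ¬(0 ≤ j ∧ j < (L:ℤ)) := by omega
      exact hj (by rw [heval2 u j hout, heval2 v j hout])
    exact hpre (xc u) (xc v) hxune hfin hFeq
  -- cardinality bound
  have hcard := Fintype.card_le_of_injective Ψ hΨinj
  have hc1 : Fintype.card (Fin L → S) = q ^ L := by
    rw [Fintype.card_fun]
    simp [hqdef]
  have hcsub : Fintype.card {v : Fin n → S // v ≠ w} = q ^ n - 1 := by
    have h1 : Fintype.card {v : Fin n → S // v = w} = 1 := Fintype.card_subtype_eq w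
    have h2 : Fintype.card {v : Fin n → S // ¬ v = w} =
        Fintype.card (Fin n → S) - Fintype.card {v : Fin n → S // v = w} :=
      Fintype.card_subtype_compl _
    rw [h2, h1, Fintype.card_fun]
    simp [hqdef]
  have hc2 : Fintype.card (Fin k → {v : Fin n → S // v ≠ w}) = (q ^ n - 1) ^ k := by
    rw [Fintype.card_fun, hcsub]
    simp
  rw [hc1, hc2] at hcard
  -- final contradiction
  have hfinal : q ^ (k * n) ≤ q ^ (2 * r) * (q ^ n - 1) ^ k := by
    calc q ^ (k * n) = q ^ (L + 2 * r) := by rw [hL]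
      _ = q ^ L * q ^ (2 * r) := pow_add q L (2*r)
      _ ≤ (q ^ n - 1) ^ k * q ^ (2 * r) := Nat.mul_le_mul_right _ hcard
      _ = q ^ (2 * r) * (q ^ n - 1) ^ k := by ring
  have hlast : (q ^ n - 1 + 1) ^ k = q ^ (k * n) := by
    have : q ^ n - 1 + 1 = q ^ n := by omega
    rw [this, ← pow_mul, Nat.mul_comm]
  rw [hlast] at hkey
  omega
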